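/- For k ≥ 1, the word V_{k−1}^− (V_{k−1} deprived of its last letter) is a prefix of V_k, where V_k are the words of the binary recursion with Ostrowski digits. Consequently the sequence (V_k)_{k≥0} converges letterwise to an infinite word. -/

import Mathlib

/-- `m`-fold concatenation of a word. -/
def wpow (W : List ℕ) : ℕ → List ℕ
  | 0 => []
  | n + 1 => W ++ wpow W n

lemma wpow_length (W : List ℕ) (n : ℕ) : (wpow W n).length = n * W.length := by
  induction n with
  | zero => simp [wpow]
  | succ n ih => simp [wpow, ih, Nat.succ_mul]; ring

lemma wpow_succ' (W : List ℕ) (n : ℕ) : wpow W (n + 1) = wpow W n ++ W := by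
  induction n with
  | zero => simp [wpow]
  | succ n ih =>
    show W ++ wpow W (n + 1) = (W ++ wpow W n) ++ W
    rw [ih]; simp

lemma wpow_comm (W : List ℕ) (n : ℕ) : W ++ wpow W n = wpow W n ++ W := by
  have h := wpow_succ' W n
  rw [show wpow W (n+1) = W ++ wpow W n from rfl] at h
  exact h

lemma wpow_singleton (x : ℕ) (n : ℕ) : wpow [x] n = List.replicate n x := by
  induction n with
  | zero => rfl
  | succ n ih => simp [wpow, ih, List.replicate_succ]

lemma take_of_prefix {p l : List ℕ} (h : p <+: l) {n : ℕ} (hn : n ≤ p.length) :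
    l.take n = p.take n := by
  obtain ⟨t, rfl⟩ := h
  exact List.take_append_of_le_length hn

/-- `V_{k−1}` deprived of its last letter is a prefix of `V_k`; consequently the
sequence `(V_k)` converges letterwise to an infinite word. -/
theorem V_converges (a b : ℕ → ℕ) (ha : ∀ k : ℕ, 1 ≤ k → 1 ≤ a k)
    (hb1 : b 1 ≤ a 1 - 1) (hb : ∀ k : ℕ, 2 ≤ k → b k ≤ a k)
    (hrule : ∀ k : ℕ, 1 ≤ k → b (k + 1) = a (k + 1) → b k = 0)
    (V : ℕ → List ℕ) (hV0 : V 0 = [0])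
    (hV1 : V 1 = wpow [0] (a 1 - b 1 - 1) ++ [1] ++ wpow [0] (b 1))
    (hV : ∀ k : ℕ, 1 ≤ k →
      V (k + 1) = wpow (V k) (a (k + 1) - b (k + 1)) ++ V (k - 1) ++ wpow (V k) (b (k + 1))) :
    (∀ k : ℕ, 1 ≤ k → (V (k - 1)).dropLast <+: V k) ∧
    ∃ s : ℕ → ℕ, ∀ n : ℕ, ∃ K : ℕ, ∀ k : ℕ, K ≤ k →
      (V k).take (n + 1) = (List.range (n + 1)).map s := by
  -- lengths
  have hlen : ∀ k : ℕ, 1 ≤ (V k).length ∧ k ≤ (V k).length := by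
    intro k
    induction k using Nat.strong_induction_on with
    | _ k ih =>
      match k with
      | 0 => simp [hV0]
      | 1 =>
        have h1 : 1 ≤ (V 1).length := by
          rw [hV1]
          simp only [List.length_append, wpow_length, List.length_cons, List.length_nil]
          omega
        exact ⟨h1, h1⟩
      | (m + 2) =>
        have h1 := ih (m + 1) (by omega)
        have h0 := ih m (by omega)
        have hrc : V (m + 2) = wpow (V (m+1)) (a (m+2) - b (m+2)) ++ V m
            ++ wpow (V (m+1)) (b (m+2)) := hV (m + 1) (by omega)
        have hba : b (m + 2) ≤ a (m + 2) := hb (m + 2) (by omega)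
        have haa : 1 ≤ a (m + 2) := ha (m + 2) (by omega)
        have hL : (V (m + 2)).length
            = (a (m+2) - b (m+2)) * (V (m+1)).length + (V m).length
              + b (m+2) * (V (m+1)).length := by
          rw [hrc]
          simp only [List.length_append, wpow_length]
        have hmul : (a (m+2) - b (m+2)) * (V (m+1)).length
            + b (m+2) * (V (m+1)).length = a (m+2) * (V (m+1)).length := by
          rw [← Nat.add_mul]; congr 1; omega
        have hge : (V (m+1)).length ≤ a (m+2) * (V (m+1)).length :=
          Nat.le_mul_of_pos_left _ haa
        omega
  have hne : ∀ k : ℕ, V k ≠ [] := by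
    intro k h
    have := (hlen k).1
    rw [h] at this; simp at this
  -- the main prefix property, reindexed
  have P : ∀ j : ℕ, (V j).dropLast <+: V (j + 1) := by
    intro j
    induction j using Nat.strong_induction_on with
    | _ j ih =>
      match j with
      | 0 => simp [hV0]
      | (j + 1) =>
        have hrc : V (j + 2) = wpow (V (j+1)) (a (j+2) - b (j+2)) ++ V j
            ++ wpow (V (j+1)) (b (j+2)) := hV (j + 1) (by omega)
        have hba : b (j + 2) ≤ a (j + 2) := hb (j + 2) (by omega)
        rcases lt_or_eq_of_le hba with hlt | heq
        · -- one copy of V (j+1) sits at the front of V (j+2)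
          obtain ⟨c, hc⟩ : ∃ c, a (j + 2) - b (j + 2) = c + 1 :=
            ⟨a (j + 2) - b (j + 2) - 1, by omega⟩
          rw [hrc, hc]
          refine (List.dropLast_prefix (V (j+1))).trans ?_
          exact ⟨wpow (V (j+1)) c ++ V j ++ wpow (V (j+1)) (b (j+2)), by simp [wpow]⟩
        · -- b (j+2) = a (j+2), hence b (j+1) = 0
          have hb0 : b (j + 1) = 0 := hrule (j + 1) (by omega) heq
          have ha2 : 1 ≤ a (j + 2) := ha (j + 2) (by omega)
          obtain ⟨c, hc⟩ : ∃ c, a (j + 2) = c + 1 := ⟨a (j + 2) - 1, by omega⟩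
          have hrc' : V (j + 2) = V j ++ (V (j+1) ++ wpow (V (j+1)) c) := by
            rw [hrc, heq, hc]
            simp [wpow]
          have Cclaim : (V (j + 1)).dropLast <+: V j ++ V (j + 1) := by
            match j with
            | 0 =>
              have hV1' : V 1 = List.replicate (a 1 - 1) 0 ++ [1] := by
                rw [hV1, hb0]
                simp [wpow_singleton, wpow]
              rw [hV1', hV0, List.dropLast_concat]
              refine ⟨[0, 1], ?_⟩
              calc List.replicate (a 1 - 1) 0 ++ [0, 1]
                  = (List.replicate (a 1 - 1) 0 ++ [0]) ++ [1] := by simp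
                _ = List.replicate (a 1 - 1 + 1) 0 ++ [1] := by
                    rw [← List.replicate_succ']
                _ = (0 :: List.replicate (a 1 - 1) 0) ++ [1] := by
                    rw [List.replicate_succ]
                _ = [0] ++ (List.replicate (a 1 - 1) 0 ++ [1]) := by simp
            | (i + 1) =>
              have hri : V (i + 2) = wpow (V (i+1)) (a (i+2) - b (i+2)) ++ V i
                  ++ wpow (V (i+1)) (b (i+2)) := hV (i + 1) (by omega)
              rw [hb0] at hri
              have hVj : V (i + 2) = wpow (V (i+1)) (a (i+2)) ++ V i := by
                rw [hri]; simp [wpow]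
              rw [hVj, List.dropLast_append_of_ne_nil (hne i),
                ← List.append_assoc, wpow_comm, List.append_assoc,
                List.prefix_append_right_inj]
              exact (ih i (by omega)).trans (List.prefix_append _ _)
          rw [hrc', ← List.append_assoc]
          exact Cclaim.trans (List.prefix_append _ _)
  have part1 : ∀ k : ℕ, 1 ≤ k → (V (k - 1)).dropLast <+: V k := by
    intro k hk
    obtain ⟨j, rfl⟩ : ∃ j, k = j + 1 := ⟨k - 1, by omega⟩
    simpa using P j
  refine ⟨part1, ?_⟩
  -- stabilization of prefixes
  have key : ∀ n k : ℕ, n + 2 ≤ k → (V k).take (n + 1) = (V (n + 2)).take (n + 1) := by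
    intro n k hk
    induction k, hk using Nat.le_induction with
    | base => rfl
    | succ k hk ihk =>
      have hdl : n + 1 ≤ ((V k).dropLast).length := by
        have := (hlen k).2
        rw [List.length_dropLast]; omega
      calc (V (k+1)).take (n+1) = ((V k).dropLast).take (n+1) :=
            take_of_prefix (P k) hdl
        _ = (V k).take (n+1) := (take_of_prefix (List.dropLast_prefix _)
            (by omega)).symm
        _ = (V (n+2)).take (n+1) := ihk
  refine ⟨fun i => (V (i + 2)).getD i 0, fun n => ⟨n + 2, fun k hk => ?_⟩⟩
  rw [key n k hk]
  apply List.ext_getElem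
  · have := (hlen (n + 2)).2
    simp; omega
  · intro i h1 h2
    have hi : i < n + 1 := by simpa using h2
    have hlen2 : i < (V (n + 2)).length := by have := (hlen (n+2)).2; omega
    have hleni : i < (V (i + 2)).length := by have := (hlen (i+2)).2; omega
    rw [List.getElem_take, List.getElem_map, List.getElem_range]
    rw [List.getD_eq_getElem _ _ hleni]
    have htk := key i (n + 2) (by omega)
    have h3 : i < ((V (n+2)).take (i+1)).length := by
      rw [List.length_take]; omega
    have h4 : i < ((V (i+2)).take (i+1)).length := by
      rw [List.length_take]; omega
    have := List.getElem_of_eq htk h3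
    rw [List.getElem_take, List.getElem_take] at this
    exact this
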